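/- Let G⁽¹⁾ and G⁽²⁾ be finite connected simple graphs, let λ₂⁽¹⁾ be the second-smallest eigenvalue of the Laplacian of G⁽¹⁾, let λ_max⁽²⁾ be the largest eigenvalue of the Laplacian of G⁽²⁾, and let n⁽²⁾ be the number of vertices of G⁽²⁾. Let e⁽¹⁾ = {v⁽¹⁾, w⁽¹⁾} be an edge of G⁽¹⁾ with effective resistance ω = ω⁽¹⁾_{v⁽¹⁾,w⁽¹⁾}, and let v⁽²⁾ be any vertex of G⁽²⁾. Then the effective resistance in the Cartesian product G⁽¹⁾ □ G⁽²⁾ across the edge joining v⁽¹⁾⊗v⁽²⁾ and w⁽¹⁾⊗v⁽²⁾ satisfies ω_e ≥ (1/n⁽²⁾ + (1 − 1/n⁽²⁾) · λ₂⁽¹⁾/(λ₂⁽¹⁾ + λ_max⁽²⁾)) · ω. -/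

import Mathlib

open Classical Matrix

/-- The four Penrose conditions characterizing the Moore–Penrose pseudoinverse
of a real square matrix. -/
def IsMoorePenroseInverse {V : Type*} [Fintype V] [DecidableEq V]
    (L P : Matrix V V ℝ) : Prop :=
  L * P * L = L ∧ P * L * P = P ∧ (L * P)ᵀ = L * P ∧ (P * L)ᵀ = P * L

/-- The Moore–Penrose pseudoinverse of a real square matrix. -/
noncomputable def pinv {V : Type*} [Fintype V] [DecidableEq V]
    (L : Matrix V V ℝ) : Matrix V V ℝ :=
  if h : ∃ P, IsMoorePenroseInverse L P then h.choose else 0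

/-- Effective resistance between `x` and `y` computed from a (weighted) Laplacian `L`. -/
noncomputable def effResM {V : Type*} [Fintype V] [DecidableEq V]
    (L : Matrix V V ℝ) (x y : V) : ℝ :=
  pinv L x x + pinv L y y - 2 * pinv L x y

/-- Effective resistance between vertices `x` and `y` of a simple graph `G`. -/
noncomputable def effRes {V : Type*} [Fintype V] [DecidableEq V]
    (G : SimpleGraph V) (x y : V) : ℝ :=
  effResM (G.lapMatrix ℝ) x y

/-- The node resistance curvature `p_x = 1 - (1/2) ∑_{y ~ x} ω_{x,y}`. -/
noncomputable def curv {V : Type*} [Fintype V] [DecidableEq V]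
    (G : SimpleGraph V) (x : V) : ℝ :=
  1 - (1/2) * ∑ y : V, if G.Adj x y then effRes G x y else 0

/-- The grid graph `P_m □ P_n` (vertex `(i,j)` of the paper corresponds to
`(⟨i-1⟩, ⟨j-1⟩) : Fin m × Fin n`). -/
def grid (m n : ℕ) : SimpleGraph (Fin m × Fin n) :=
  (SimpleGraph.pathGraph m).boxProd (SimpleGraph.pathGraph n)

section Helpers1
variable {V : Type*} [Fintype V] [DecidableEq V]

lemma mp_unique {L P Q : Matrix V V ℝ} (hP : IsMoorePenroseInverse L P)
    (hQ : IsMoorePenroseInverse L Q) : P = Q := by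
  obtain ⟨hP1, hP2, hP3, hP4⟩ := hP
  obtain ⟨hQ1, hQ2, hQ3, hQ4⟩ := hQ
  have hLP : L * P = L * Q := by
    calc L * P = (L * P)ᵀ := hP3.symm
    _ = Pᵀ * (L * Q * L)ᵀ := by rw [hQ1, transpose_mul]
    _ = (Pᵀ * Lᵀ) * (Qᵀ * Lᵀ) := by rw [transpose_mul, transpose_mul]; noncomm_ring
    _ = (L * P)ᵀ * (L * Q)ᵀ := by rw [transpose_mul, transpose_mul]
    _ = (L * P) * (L * Q) := by rw [hP3, hQ3]
    _ = (L * P * L) * Q := by noncomm_ring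
    _ = L * Q := by rw [hP1]
  have hPL : P * L = Q * L := by
    calc P * L = (P * L)ᵀ := hP4.symm
    _ = (L * Q * L)ᵀ * Pᵀ := by rw [hQ1, transpose_mul]
    _ = (Lᵀ * Qᵀ) * (Lᵀ * Pᵀ) := by rw [transpose_mul, transpose_mul]; noncomm_ring
    _ = (Q * L)ᵀ * (P * L)ᵀ := by rw [transpose_mul, transpose_mul]
    _ = (Q * L) * (P * L) := by rw [hP4, hQ4]
    _ = Q * (L * P * L) := by noncomm_ring
    _ = Q * L := by rw [hP1]
  calc P = P * L * P := hP2.symm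
  _ = Q * L * P := by rw [hPL]
  _ = Q * (L * P) := by noncomm_ring
  _ = Q * (L * Q) := by rw [hLP]
  _ = Q * L * Q := by noncomm_ring
  _ = Q := hQ2

lemma herm_exists_mp {L : Matrix V V ℝ} (hL : L.IsHermitian) :
    ∃ P, IsMoorePenroseInverse L P := by
  classical
  set U : Matrix V V ℝ := (hL.eigenvectorUnitary : Matrix V V ℝ) with hU
  set d : V → ℝ := hL.eigenvalues with hd
  have hUU : star U * U = 1 := Unitary.coe_star_mul_self _
  have hUU' : U * star U = 1 := Unitary.coe_mul_star_self _
  have hLspec : L = U * diagonal d * star U := by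
    have := hL.spectral_theorem
    simpa [RCLike.ofReal_real_eq_id] using this
  set e : V → ℝ := fun i => if d i = 0 then 0 else (d i)⁻¹ with he
  refine ⟨U * diagonal e * star U, ?_, ?_, ?_, ?_⟩
  · rw [hLspec]
    calc (U * diagonal d * star U) * (U * diagonal e * star U) * (U * diagonal d * star U)
        = U * (diagonal d * (star U * U) * diagonal e * (star U * U) * diagonal d) * star U := by
          noncomm_ring
      _ = U * (diagonal d * diagonal e * diagonal d) * star U := by rw [hUU]; noncomm_ring
      _ = U * diagonal d * star U := by
          rw [diagonal_mul_diagonal, diagonal_mul_diagonal]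
          have hfun : (fun i => d i * e i * d i) = d := by
            funext i
            by_cases h : d i = 0 <;>
              simp [he, Pi.mul_apply, h] <;> field_simp
          rw [hfun]
  · rw [hLspec]
    calc (U * diagonal e * star U) * (U * diagonal d * star U) * (U * diagonal e * star U)
        = U * (diagonal e * (star U * U) * diagonal d * (star U * U) * diagonal e) * star U := by
          noncomm_ring
      _ = U * (diagonal e * diagonal d * diagonal e) * star U := by rw [hUU]; noncomm_ring
      _ = U * diagonal e * star U := by
          rw [diagonal_mul_diagonal, diagonal_mul_diagonal]
          have hfun : (fun i => e i * d i * e i) = e := by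
            funext i
            by_cases h : d i = 0 <;>
              simp [he, Pi.mul_apply, h] <;> field_simp
          rw [hfun]
  · rw [hLspec]
    have : (U * diagonal d * star U) * (U * diagonal e * star U)
        = U * diagonal (fun i => d i * e i) * star U := by
      rw [← diagonal_mul_diagonal]
      calc (U * diagonal d * star U) * (U * diagonal e * star U)
          = U * (diagonal d * (star U * U) * diagonal e) * star U := by noncomm_ring
        _ = U * (diagonal d * diagonal e) * star U := by rw [hUU]; noncomm_ring
    rw [this]
    have hstar : star U = Uᵀ := by
      rw [Matrix.star_eq_conjTranspose, conjTranspose_eq_transpose_of_trivial]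
    rw [hstar, transpose_mul, transpose_mul, transpose_transpose, diagonal_transpose]
    noncomm_ring
  · rw [hLspec]
    have : (U * diagonal e * star U) * (U * diagonal d * star U)
        = U * diagonal (fun i => e i * d i) * star U := by
      rw [← diagonal_mul_diagonal]
      calc (U * diagonal e * star U) * (U * diagonal d * star U)
          = U * (diagonal e * (star U * U) * diagonal d) * star U := by noncomm_ring
        _ = U * (diagonal e * diagonal d) * star U := by rw [hUU]; noncomm_ring
    rw [this]
    have hstar : star U = Uᵀ := by
      rw [Matrix.star_eq_conjTranspose, conjTranspose_eq_transpose_of_trivial]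
    rw [hstar, transpose_mul, transpose_mul, transpose_transpose, diagonal_transpose]
    noncomm_ring

lemma pinv_isMP {L : Matrix V V ℝ} (hL : L.IsHermitian) :
    IsMoorePenroseInverse L (pinv L) := by
  have hex := herm_exists_mp hL
  rw [pinv, dif_pos hex]
  exact hex.choose_spec

lemma pinv_transpose {L : Matrix V V ℝ} (hL : L.IsHermitian) :
    (pinv L)ᵀ = pinv L := by
  have hLt : Lᵀ = L := by
    rw [← conjTranspose_eq_transpose_of_trivial]; exact hL
  obtain ⟨h1, h2, h3, h4⟩ := pinv_isMP hL
  set P := pinv L with hP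
  refine mp_unique (L := L) ?_ (pinv_isMP hL)
  refine ⟨?_, ?_, ?_, ?_⟩
  · apply transpose_injective
    calc (L * Pᵀ * L)ᵀ = Lᵀ * (P * Lᵀ) := by
          rw [transpose_mul, transpose_mul, transpose_transpose]
    _ = L * P * L := by rw [hLt, mul_assoc]
    _ = Lᵀ := by rw [h1, hLt]
  · apply transpose_injective
    calc (Pᵀ * L * Pᵀ)ᵀ = P * (Lᵀ * Pᵀᵀ) := by
          rw [transpose_mul, transpose_mul, transpose_transpose]
    _ = P * L * P := by rw [transpose_transpose, hLt, mul_assoc]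
    _ = Pᵀᵀ := by rw [h2, transpose_transpose]
  · calc (L * Pᵀ)ᵀ = P * Lᵀ := by rw [transpose_mul, transpose_transpose]
    _ = (P * L)ᵀᵀ := by rw [transpose_transpose, hLt]
    _ = (Lᵀ * Pᵀ) := by rw [h4, transpose_mul]
    _ = L * Pᵀ := by rw [hLt]
  · calc (Pᵀ * L)ᵀ = Lᵀ * P := by rw [transpose_mul, transpose_transpose]
    _ = (L * P)ᵀᵀ := by rw [transpose_transpose, hLt]
    _ = (Pᵀ * Lᵀ) := by rw [h3, transpose_mul]
    _ = Pᵀ * L := by rw [hLt]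

end Helpers1

section Helpers2
variable {V : Type*} [Fintype V] [DecidableEq V]

lemma herm_star_eq {L : Matrix V V ℝ} (hL : L.IsHermitian) :
    star (hL.eigenvectorUnitary : Matrix V V ℝ) = (hL.eigenvectorUnitary : Matrix V V ℝ)ᵀ := by
  rw [Matrix.star_eq_conjTranspose, conjTranspose_eq_transpose_of_trivial]

lemma herm_spec {L : Matrix V V ℝ} (hL : L.IsHermitian) :
    L = (hL.eigenvectorUnitary : Matrix V V ℝ) * diagonal hL.eigenvalues *
      star (hL.eigenvectorUnitary : Matrix V V ℝ) := by
  simpa [RCLike.ofReal_real_eq_id] using hL.spectral_theorem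

lemma herm_quad_eq {L : Matrix V V ℝ} (hL : L.IsHermitian) (x : V → ℝ) :
    x ⬝ᵥ (L *ᵥ x) = ∑ i, hL.eigenvalues i *
      ((star (hL.eigenvectorUnitary : Matrix V V ℝ) *ᵥ x) i)^2 := by
  set U := (hL.eigenvectorUnitary : Matrix V V ℝ) with hUdef
  set y := star U *ᵥ x with hy
  have hyU : x ᵥ* U = y := by rw [hy, herm_star_eq hL, ← mulVec_transpose]
  calc x ⬝ᵥ (L *ᵥ x)
      = x ⬝ᵥ ((U * diagonal hL.eigenvalues * star U) *ᵥ x) := by rw [← herm_spec hL]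
  _ = x ⬝ᵥ (U *ᵥ (diagonal hL.eigenvalues *ᵥ y)) := by
        rw [← mulVec_mulVec, ← mulVec_mulVec, ← hy]
  _ = y ⬝ᵥ (diagonal hL.eigenvalues *ᵥ y) := by rw [dotProduct_mulVec, hyU]
  _ = ∑ i, hL.eigenvalues i * (y i)^2 := by
        simp [dotProduct, mulVec_diagonal]
        exact Finset.sum_congr rfl fun i _ => by ring

lemma herm_norm_eq {L : Matrix V V ℝ} (hL : L.IsHermitian) (x : V → ℝ) :
    x ⬝ᵥ x = ∑ i, ((star (hL.eigenvectorUnitary : Matrix V V ℝ) *ᵥ x) i)^2 := by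
  set U := (hL.eigenvectorUnitary : Matrix V V ℝ) with hUdef
  set y := star U *ᵥ x with hy
  have hUU' : U * star U = 1 := Unitary.coe_mul_star_self _
  have hyU : x ᵥ* U = y := by rw [hy, herm_star_eq hL, ← mulVec_transpose]
  have hx : x = U *ᵥ y := by rw [hy, mulVec_mulVec, hUU', one_mulVec]
  calc x ⬝ᵥ x = x ⬝ᵥ (U *ᵥ y) := by rw [← hx]
  _ = y ⬝ᵥ y := by rw [dotProduct_mulVec, hyU]
  _ = ∑ i, (y i)^2 := by simp [dotProduct, pow_two]

lemma herm_mulVec_coords {L : Matrix V V ℝ} (hL : L.IsHermitian) (w : V → ℝ) :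
    star (hL.eigenvectorUnitary : Matrix V V ℝ) *ᵥ (L *ᵥ w)
      = fun i => hL.eigenvalues i *
          ((star (hL.eigenvectorUnitary : Matrix V V ℝ) *ᵥ w) i) := by
  set U := (hL.eigenvectorUnitary : Matrix V V ℝ) with hUdef
  have hUU : star U * U = 1 := Unitary.coe_star_mul_self _
  calc star U *ᵥ (L *ᵥ w)
      = (star U * (U * diagonal hL.eigenvalues * star U)) *ᵥ w := by
        rw [mulVec_mulVec, ← herm_spec hL]
  _ = (diagonal hL.eigenvalues * star U) *ᵥ w := by
        rw [show star U * (U * diagonal hL.eigenvalues * star U)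
            = (star U * U) * (diagonal hL.eigenvalues * star U) by noncomm_ring, hUU, one_mul]
  _ = diagonal hL.eigenvalues *ᵥ (star U *ᵥ w) := by rw [mulVec_mulVec]
  _ = fun i => hL.eigenvalues i * ((star U *ᵥ w) i) := by
        funext i; rw [mulVec_diagonal]

lemma quad_upper {L : Matrix V V ℝ} (hL : L.IsHermitian) {C : ℝ}
    (hC : ∀ i, hL.eigenvalues i ≤ C) (x : V → ℝ) :
    x ⬝ᵥ (L *ᵥ x) ≤ C * (x ⬝ᵥ x) := by
  rw [herm_quad_eq hL, herm_norm_eq hL, Finset.mul_sum]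
  exact Finset.sum_le_sum fun i _ => mul_le_mul_of_nonneg_right (hC i) (sq_nonneg _)

lemma quad_lower {L : Matrix V V ℝ} (hL : L.IsHermitian) {c : ℝ}
    (hc : ∀ i, hL.eigenvalues i ≠ 0 → c ≤ hL.eigenvalues i) (w : V → ℝ) :
    c * ((L *ᵥ w) ⬝ᵥ (L *ᵥ w)) ≤ (L *ᵥ w) ⬝ᵥ (L *ᵥ (L *ᵥ w)) := by
  rw [herm_quad_eq hL, herm_norm_eq hL, Finset.mul_sum, herm_mulVec_coords hL]
  refine Finset.sum_le_sum fun i _ => ?_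
  by_cases h : hL.eigenvalues i = 0
  · simp [h]
  · have h1 := hc i h
    have h2 : (0:ℝ) ≤ (hL.eigenvalues i * (star (hL.eigenvectorUnitary : Matrix V V ℝ) *ᵥ w) i)^2 :=
      sq_nonneg _
    exact mul_le_mul_of_nonneg_right h1 h2

end Helpers2

section Helpers3
variable {V : Type*} [Fintype V] [DecidableEq V]

lemma spectrum_nonneg_of_posSemidef {L : Matrix V V ℝ} (hL : L.PosSemidef)
    {μ : ℝ} (hμ : μ ∈ spectrum ℝ L) : 0 ≤ μ := by
  rw [spectrum.mem_iff] at hμ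
  have hdet : (algebraMap ℝ (Matrix V V ℝ) μ - L).det = 0 := by
    by_contra h
    exact hμ ((Matrix.isUnit_iff_isUnit_det _).2 (isUnit_iff_ne_zero.2 h))
  obtain ⟨v, hv0, hv⟩ := (Matrix.exists_mulVec_eq_zero_iff).2 hdet
  have hLv : L *ᵥ v = μ • v := by
    have := hv
    rw [sub_mulVec] at this
    have h2 : algebraMap ℝ (Matrix V V ℝ) μ *ᵥ v = μ • v := by
      funext i
      simp [Matrix.algebraMap_eq_diagonal, mulVec_diagonal, Pi.algebraMap_apply,
        Algebra.algebraMap_self_apply]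
    rw [h2] at this
    linear_combination (norm := module) -this
  have hpos : 0 < v ⬝ᵥ v := by
    rcases Function.ne_iff.1 hv0 with ⟨i, hi⟩
    have : ∀ j, 0 ≤ v j * v j := fun j => mul_self_nonneg _
    have hsum : 0 < ∑ j, v j * v j :=
      Finset.sum_pos' (fun j _ => this j) ⟨i, Finset.mem_univ i, by nlinarith [sq_abs (v i), abs_pos.2 hi]⟩
    simpa [dotProduct] using hsum
  have hq : 0 ≤ v ⬝ᵥ (L *ᵥ v) := by simpa using hL.dotProduct_mulVec_nonneg v
  rw [hLv] at hq
  have : v ⬝ᵥ (μ • v) = μ * (v ⬝ᵥ v) := by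
    simp [dotProduct, Finset.mul_sum]
    exact Finset.sum_congr rfl fun j _ => by ring
  rw [this] at hq
  exact nonneg_of_mul_nonneg_left hq hpos

end Helpers3

section Helpers4
variable {V : Type*} [Fintype V] [DecidableEq V]


lemma exists_preimage {L : Matrix V V ℝ} (hL : L.IsHermitian) (b : V → ℝ)
    (hb : ∀ v, L *ᵥ v = 0 → b ⬝ᵥ v = 0) : ∃ c, L *ᵥ c = b := by
  set U := (hL.eigenvectorUnitary : Matrix V V ℝ) with hUdef
  set d := hL.eigenvalues with hd
  have hUU : star U * U = 1 := Unitary.coe_star_mul_self _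
  have hUU' : U * star U = 1 := Unitary.coe_mul_star_self _
  have hLspec : L = U * diagonal d * star U := herm_spec hL
  set y := star U *ᵥ b with hy
  have hy0 : ∀ i, d i = 0 → y i = 0 := by
    intro i hi
    have hcol : L *ᵥ (U *ᵥ Pi.single i 1) = 0 := by
      rw [mulVec_mulVec, hLspec, mul_assoc, hUU, mul_one, ← mulVec_mulVec,
        diagonal_mulVec_single, hi, zero_mul]
      simp
    have hb0 : b ⬝ᵥ (U *ᵥ Pi.single i 1) = 0 := hb _ hcol
    have hyi : y i = b ⬝ᵥ (U *ᵥ Pi.single i 1) := by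
      simp [hy, hUdef, herm_star_eq hL, mulVec, dotProduct, transpose_apply,
        Pi.single_apply, mul_comm, Matrix.IsHermitian.eigenvectorUnitary_apply]
    rw [hyi, hb0]
  set e : V → ℝ := fun i => if d i = 0 then 0 else (d i)⁻¹ with he
  refine ⟨U *ᵥ (fun i => e i * y i), ?_⟩
  have h1 : L *ᵥ (U *ᵥ fun i => e i * y i) = U *ᵥ (diagonal d *ᵥ (fun i => e i * y i)) := by
    rw [mulVec_mulVec, hLspec, mul_assoc, hUU, mul_one, ← mulVec_mulVec]
  rw [h1]
  have h2 : diagonal d *ᵥ (fun i => e i * y i) = y := by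
    funext i
    rw [mulVec_diagonal]
    by_cases h : d i = 0
    · simp [he, h, hy0 i h]
    · simp only [he, if_neg h]; field_simp
  rw [h2, hy, mulVec_mulVec, hUU', one_mulVec]

lemma quad_bound {L : Matrix V V ℝ} (hL : L.PosSemidef) {b u : V → ℝ}
    (hu : L *ᵥ u = b) (z : V → ℝ) :
    2 * (b ⬝ᵥ z) - z ⬝ᵥ (L *ᵥ z) ≤ b ⬝ᵥ u := by
  have hLt : Lᵀ = L := by
    rw [← conjTranspose_eq_transpose_of_trivial]; exact hL.1
  have hsym : ∀ v w : V → ℝ, v ⬝ᵥ (L *ᵥ w) = w ⬝ᵥ (L *ᵥ v) := by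
    intro v w
    rw [dotProduct_mulVec]
    conv_lhs => rw [← hLt]
    rw [vecMul_transpose, dotProduct_comm]
  have h0 : 0 ≤ (z - u) ⬝ᵥ (L *ᵥ (z - u)) := by simpa using hL.dotProduct_mulVec_nonneg (z - u)
  rw [mulVec_sub, dotProduct_sub, sub_dotProduct, sub_dotProduct, hu] at h0
  have e1 : u ⬝ᵥ (L *ᵥ z) = z ⬝ᵥ b := by rw [hsym, hu]
  have e2 : u ⬝ᵥ b = b ⬝ᵥ u := dotProduct_comm _ _
  have e3 : z ⬝ᵥ b = b ⬝ᵥ z := dotProduct_comm _ _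
  rw [e1, e2, e3] at h0
  linarith

end Helpers4

section Helpers5
lemma ite_or_split {A B : Prop} [Decidable A] [Decidable B] (h : ¬(A ∧ B)) (r : ℝ) :
    (if A ∨ B then r else 0) = (if A then r else 0) + (if B then r else 0) := by
  by_cases hA : A <;> by_cases hB : B <;> simp [hA, hB]
  exact absurd ⟨hA, hB⟩ h

variable {V₁ V₂ : Type*} [Fintype V₁] [DecidableEq V₁] [Fintype V₂] [DecidableEq V₂]

lemma quad_form_eq_sum (G : SimpleGraph V₁) [DecidableRel G.Adj] (x : V₁ → ℝ) :
    x ⬝ᵥ (G.lapMatrix ℝ *ᵥ x)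
      = (∑ i : V₁, ∑ j : V₁, if G.Adj i j then (x i - x j)^2 else 0) / 2 := by
  rw [← Matrix.toLinearMap₂'_apply', SimpleGraph.lapMatrix_toLinearMap₂']

lemma boxProd_quad (G₁ : SimpleGraph V₁) (G₂ : SimpleGraph V₂)
    (z₁ : V₁ → ℝ) (f : V₂ → ℝ) :
    (fun p : V₁ × V₂ => z₁ p.1 * f p.2) ⬝ᵥ
        ((G₁.boxProd G₂).lapMatrix ℝ *ᵥ (fun p : V₁ × V₂ => z₁ p.1 * f p.2))
      = (∑ j, (f j)^2) * (z₁ ⬝ᵥ (G₁.lapMatrix ℝ *ᵥ z₁))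
        + (∑ i, (z₁ i)^2) * (f ⬝ᵥ (G₂.lapMatrix ℝ *ᵥ f)) := by
  rw [quad_form_eq_sum, quad_form_eq_sum, quad_form_eq_sum]
  rw [Fintype.sum_prod_type]
  have hsplit : ∀ (i : V₁) (j : V₂),
      (∑ q : V₁ × V₂, if (G₁.boxProd G₂).Adj (i, j) q
          then (z₁ i * f j - z₁ q.1 * f q.2)^2 else 0)
      = (∑ i' : V₁, ∑ j' : V₂, if G₁.Adj i i' ∧ j = j'
            then (z₁ i * f j - z₁ i' * f j')^2 else 0)
        + (∑ i' : V₁, ∑ j' : V₂, if G₂.Adj j j' ∧ i = i'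
            then (z₁ i * f j - z₁ i' * f j')^2 else 0) := by
    intro i j
    rw [Fintype.sum_prod_type, ← Finset.sum_add_distrib]
    refine Finset.sum_congr rfl fun i' _ => ?_
    rw [← Finset.sum_add_distrib]
    refine Finset.sum_congr rfl fun j' _ => ?_
    have hcond : (G₁.boxProd G₂).Adj (i, j) (i', j') ↔
        (G₁.Adj i i' ∧ j = j') ∨ (G₂.Adj j j' ∧ i = i') := SimpleGraph.boxProd_adj
    simp only [hcond]
    refine ite_or_split ?_ _
    rintro ⟨⟨h1, rfl⟩, h2, rfl⟩
    exact G₂.irrefl h2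
  simp_rw [hsplit, Finset.sum_add_distrib]
  have e1 : (∑ i : V₁, ∑ j : V₂, ∑ i' : V₁, ∑ j' : V₂,
        if G₁.Adj i i' ∧ j = j' then (z₁ i * f j - z₁ i' * f j')^2 else 0)
      = (∑ j, (f j)^2) * (∑ i : V₁, ∑ i' : V₁,
          if G₁.Adj i i' then (z₁ i - z₁ i')^2 else 0) := by
    have h1 : ∀ (i : V₁) (j : V₂) (i' : V₁),
        (∑ j' : V₂, if G₁.Adj i i' ∧ j = j' then (z₁ i * f j - z₁ i' * f j')^2 else 0)
        = if G₁.Adj i i' then (f j)^2 * (z₁ i - z₁ i')^2 else 0 := by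
      intro i j i'
      by_cases hA : G₁.Adj i i'
      · simp only [hA, true_and, Finset.sum_ite_eq, Finset.mem_univ, if_true]
        ring
      · simp [hA]
    simp_rw [h1]
    rw [Finset.sum_comm, Finset.sum_mul]
    refine Finset.sum_congr rfl fun j _ => ?_
    simp only [Finset.mul_sum]
    refine Finset.sum_congr rfl fun i _ => Finset.sum_congr rfl fun i' _ => ?_
    split_ifs <;> simp
  have e2 : (∑ i : V₁, ∑ j : V₂, ∑ i' : V₁, ∑ j' : V₂,
        if G₂.Adj j j' ∧ i = i' then (z₁ i * f j - z₁ i' * f j')^2 else 0)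
      = (∑ i, (z₁ i)^2) * (∑ j : V₂, ∑ j' : V₂,
          if G₂.Adj j j' then (f j - f j')^2 else 0) := by
    have h2 : ∀ (i : V₁) (j : V₂),
        (∑ i' : V₁, ∑ j' : V₂,
            if G₂.Adj j j' ∧ i = i' then (z₁ i * f j - z₁ i' * f j')^2 else 0)
        = ∑ j' : V₂, if G₂.Adj j j' then (z₁ i)^2 * (f j - f j')^2 else 0 := by
      intro i j
      have hinner : ∀ i' : V₁,
          (∑ j' : V₂, if G₂.Adj j j' ∧ i = i' then (z₁ i * f j - z₁ i' * f j')^2 else 0)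
          = if i = i' then ∑ j' : V₂, if G₂.Adj j j'
              then (z₁ i * f j - z₁ i' * f j')^2 else 0 else 0 := by
        intro i'
        by_cases hii : i = i' <;> simp [hii]
      simp_rw [hinner]
      simp only [Finset.sum_ite_eq, Finset.mem_univ, if_true]
      refine Finset.sum_congr rfl fun j' _ => ?_
      split_ifs <;> ring
    simp_rw [h2]
    rw [Finset.sum_mul]
    refine Finset.sum_congr rfl fun i _ => ?_
    simp only [Finset.mul_sum]
    refine Finset.sum_congr rfl fun j _ => Finset.sum_congr rfl fun j' _ => ?_
    split_ifs <;> simp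
  rw [e1, e2]
  ring

end Helpers5

section Helpers6
variable {V : Type*} [Fintype V] [DecidableEq V]


lemma pinv_mulVec_solves {L : Matrix V V ℝ} (hL : L.IsHermitian) {b : V → ℝ}
    (hb : ∀ v, L *ᵥ v = 0 → b ⬝ᵥ v = 0) : L *ᵥ (pinv L *ᵥ b) = b := by
  obtain ⟨c, hc⟩ := exists_preimage hL b hb
  obtain ⟨h1, -, -, -⟩ := pinv_isMP hL
  calc L *ᵥ (pinv L *ᵥ b) = (L * pinv L * L) *ᵥ c := by
        rw [← hc, mulVec_mulVec, mulVec_mulVec]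
  _ = b := by rw [h1, hc]

lemma effResM_eq_dot {L : Matrix V V ℝ} (hL : L.IsHermitian) (x y : V) :
    effResM L x y =
      (fun i => (if i = x then (1:ℝ) else 0) - if i = y then 1 else 0) ⬝ᵥ
        (pinv L *ᵥ (fun i => (if i = x then (1:ℝ) else 0) - if i = y then 1 else 0)) := by
  have hsymP : pinv L x y = pinv L y x := by
    conv_lhs => rw [← pinv_transpose hL]
    rw [transpose_apply]
  have hmv : ∀ i, (pinv L *ᵥ (fun i => (if i = x then (1:ℝ) else 0) - if i = y then 1 else 0)) i
      = pinv L i x - pinv L i y := by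
    intro i
    simp [mulVec, dotProduct, mul_sub, Finset.sum_sub_distrib, mul_ite]
  rw [show (fun i => (if i = x then (1:ℝ) else 0) - if i = y then 1 else 0) ⬝ᵥ
      (pinv L *ᵥ (fun i => (if i = x then (1:ℝ) else 0) - if i = y then 1 else 0))
      = ∑ i, ((if i = x then (1:ℝ) else 0) - if i = y then 1 else 0) *
          (pinv L i x - pinv L i y) from Finset.sum_congr rfl fun i _ => by rw [hmv i]]
  rw [Finset.sum_congr rfl (fun i (_ : i ∈ Finset.univ) => show
    ((if i = x then (1:ℝ) else 0) - if i = y then 1 else 0) * (pinv L i x - pinv L i y)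
    = (if i = x then pinv L i x - pinv L i y else 0)
      - (if i = y then pinv L i x - pinv L i y else 0) by split_ifs <;> ring)]
  rw [Finset.sum_sub_distrib]
  simp only [Finset.sum_ite_eq', Finset.mem_univ, if_true]
  rw [effResM, hsymP]
  ring

end Helpers6
section Helpers7
variable {V : Type*} [Fintype V] [DecidableEq V]

lemma dot_mulVec_symm {L : Matrix V V ℝ} (hLt : Lᵀ = L) (v w : V → ℝ) :
    v ⬝ᵥ (L *ᵥ w) = w ⬝ᵥ (L *ᵥ v) := by
  rw [dotProduct_mulVec]
  conv_lhs => rw [← hLt]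
  rw [vecMul_transpose, dotProduct_comm]

lemma diff_dotProduct (x y : V) (v : V → ℝ) :
    (fun i => (if i = x then (1:ℝ) else 0) - if i = y then 1 else 0) ⬝ᵥ v = v x - v y := by
  have : ∀ i, ((if i = x then (1:ℝ) else 0) - if i = y then 1 else 0) * v i
      = (if i = x then v i else 0) - (if i = y then v i else 0) := by
    intro i; split_ifs <;> ring
  rw [dotProduct, Finset.sum_congr rfl fun i _ => this i, Finset.sum_sub_distrib]
  simp [Finset.sum_ite_eq']

end Helpers7
theorem product_edge_effres_lower_bound
    {V₁ V₂ : Type*} [Fintype V₁] [DecidableEq V₁] [Fintype V₂] [DecidableEq V₂]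
    (G₁ : SimpleGraph V₁) (G₂ : SimpleGraph V₂)
    (h₁ : G₁.Connected) (h₂ : G₂.Connected)
    (lam₂ lamMax : ℝ)
    -- `lam₂` is the second-smallest Laplacian eigenvalue of the connected graph `G₁`,
    -- i.e. its smallest nonzero eigenvalue:
    (hlam₂ : lam₂ ∈ spectrum ℝ (G₁.lapMatrix ℝ) ∧ lam₂ ≠ 0 ∧
      ∀ μ ∈ spectrum ℝ (G₁.lapMatrix ℝ), μ ≠ 0 → lam₂ ≤ μ)
    -- `lamMax` is the largest Laplacian eigenvalue of `G₂`:
    (hlamMax : lamMax ∈ spectrum ℝ (G₂.lapMatrix ℝ) ∧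
      ∀ μ ∈ spectrum ℝ (G₂.lapMatrix ℝ), μ ≤ lamMax)
    (v₁ w₁ : V₁) (hadj : G₁.Adj v₁ w₁) (v₂ : V₂) :
    ((Fintype.card V₂ : ℝ)⁻¹
        + (1 - (Fintype.card V₂ : ℝ)⁻¹) * (lam₂ / (lam₂ + lamMax)))
        * effRes G₁ v₁ w₁
      ≤ effRes (G₁.boxProd G₂) (v₁, v₂) (w₁, v₂) := by
  classical
  -- Notation
  set L₁ := G₁.lapMatrix ℝ with hL₁def
  set L₂ := G₂.lapMatrix ℝ with hL₂def
  set L := (G₁.boxProd G₂).lapMatrix ℝ with hLdef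
  have hPSD₁ : L₁.PosSemidef := SimpleGraph.posSemidef_lapMatrix ℝ G₁
  have hPSD₂ : L₂.PosSemidef := SimpleGraph.posSemidef_lapMatrix ℝ G₂
  have hPSD : L.PosSemidef := SimpleGraph.posSemidef_lapMatrix ℝ (G₁.boxProd G₂)
  have hH₁ : L₁.IsHermitian := hPSD₁.1
  have hH₂ : L₂.IsHermitian := hPSD₂.1
  have hH : L.IsHermitian := hPSD.1
  have hL₂t : L₂ᵀ = L₂ := by
    rw [← conjTranspose_eq_transpose_of_trivial]; exact hH₂
  -- basic scalars
  have : Nonempty V₂ := ⟨v₂⟩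
  set n : ℝ := (Fintype.card V₂ : ℝ) with hndef
  have hn0 : 0 < n := by
    have := Fintype.card_pos (α := V₂)
    rw [hndef]; exact_mod_cast this
  have hn1 : (1:ℝ) ≤ n := by
    have : 1 ≤ Fintype.card V₂ := Fintype.card_pos
    rw [hndef]; exact_mod_cast this
  have hninv : n⁻¹ ≤ 1 := by
    rw [inv_le_one_iff₀]; right; exact hn1
  have hninv0 : 0 < n⁻¹ := by positivity
  have hlam2pos : 0 < lam₂ :=
    lt_of_le_of_ne (spectrum_nonneg_of_posSemidef hPSD₁ hlam₂.1) (Ne.symm hlam₂.2.1)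
  have hlamMax0 : 0 ≤ lamMax := spectrum_nonneg_of_posSemidef hPSD₂ hlamMax.1
  have hSpos : 0 < lam₂ + lamMax := by linarith
  set t : ℝ := lam₂ / (lam₂ + lamMax) with htdef
  have ht0 : 0 ≤ t := by positivity
  -- the vectors
  set a : V₁ → ℝ := fun i => (if i = v₁ then 1 else 0) - if i = w₁ then 1 else 0 with hadef
  set b : V₁ × V₂ → ℝ :=
    fun p => (if p = (v₁, v₂) then 1 else 0) - if p = (w₁, v₂) then 1 else 0 with hbdef
  have ha_ker : ∀ v, L₁ *ᵥ v = 0 → a ⬝ᵥ v = 0 := by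
    intro v hv
    have hconst := (G₁.lapMatrix_mulVec_eq_zero_iff_forall_reachable (x := v)).1
      hv
    rw [hadef, diff_dotProduct]
    rw [hconst v₁ w₁ (h₁.preconnected v₁ w₁), sub_self]
  have hb_ker : ∀ v, L *ᵥ v = 0 → b ⬝ᵥ v = 0 := by
    intro v hv
    have hconst := ((G₁.boxProd G₂).lapMatrix_mulVec_eq_zero_iff_forall_reachable (x := v)).1
      hv
    rw [hbdef, diff_dotProduct]
    rw [hconst (v₁, v₂) (w₁, v₂) ((h₁.boxProd h₂).preconnected _ _), sub_self]
  set z₁ : V₁ → ℝ := pinv L₁ *ᵥ a with hz₁def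
  have hz₁ : L₁ *ᵥ z₁ = a := pinv_mulVec_solves hH₁ ha_ker
  set ω : ℝ := a ⬝ᵥ z₁ with hωdef
  have hωeff : effRes G₁ v₁ w₁ = ω := by
    rw [effRes, effResM_eq_dot hH₁ v₁ w₁]
  have hz₁quad : z₁ ⬝ᵥ (L₁ *ᵥ z₁) = ω := by
    rw [hz₁, hωdef, dotProduct_comm]
  have hω0 : 0 ≤ ω := by
    rw [← hz₁quad]
    simpa using hPSD₁.dotProduct_mulVec_nonneg z₁
  -- norm bound on z₁
  have hz₁range : L₁ *ᵥ (pinv L₁ *ᵥ z₁) = z₁ := by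
    obtain ⟨p1, p2, p3, p4⟩ := pinv_isMP hH₁
    have hL₁t : L₁ᵀ = L₁ := by
      rw [← conjTranspose_eq_transpose_of_trivial]; exact hH₁
    have h5 : L₁ * pinv L₁ = pinv L₁ * L₁ := by
      calc L₁ * pinv L₁ = (L₁ * pinv L₁)ᵀ := p3.symm
      _ = (pinv L₁)ᵀ * L₁ᵀ := transpose_mul _ _
      _ = pinv L₁ * L₁ := by rw [pinv_transpose hH₁, hL₁t]
    calc L₁ *ᵥ (pinv L₁ *ᵥ z₁) = (L₁ * pinv L₁) *ᵥ (pinv L₁ *ᵥ a) := by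
          rw [mulVec_mulVec, hz₁def]
    _ = ((pinv L₁ * L₁) * pinv L₁) *ᵥ a := by rw [h5, mulVec_mulVec]
    _ = z₁ := by rw [p2, hz₁def]
  have hz₁norm : lam₂ * (z₁ ⬝ᵥ z₁) ≤ ω := by
    have hc : ∀ i, hH₁.eigenvalues i ≠ 0 → lam₂ ≤ hH₁.eigenvalues i :=
      fun i hi => hlam₂.2.2 _ (hH₁.eigenvalues_mem_spectrum_real i) hi
    have := quad_lower hH₁ hc (pinv L₁ *ᵥ z₁)
    rw [hz₁range] at this
    rw [← hz₁quad]
    exact this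
  -- second factor data
  set q : V₂ → ℝ := fun j => (if j = v₂ then 1 else 0) - n⁻¹ with hqdef
  set f : V₂ → ℝ := fun j => n⁻¹ + t * q j with hfdef
  have hfv₂ : f v₂ = n⁻¹ + t * (1 - n⁻¹) := by simp [hfdef, hqdef]
  have hqq : q ⬝ᵥ q = 1 - n⁻¹ := by
    have hterm : ∀ j, q j * q j
        = (if j = v₂ then (1 - 2 * n⁻¹ : ℝ) else 0) + n⁻¹ * n⁻¹ := by
      intro j
      rw [hqdef]
      by_cases h : j = v₂ <;> simp [h] <;> ring
    rw [dotProduct, Finset.sum_congr rfl fun j _ => hterm j, Finset.sum_add_distrib]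
    rw [Finset.sum_ite_eq' Finset.univ v₂ (fun _ => (1 - 2*n⁻¹ : ℝ)),
      if_pos (Finset.mem_univ v₂), Finset.sum_const, Finset.card_univ, nsmul_eq_mul,
      ← hndef]
    field_simp
    ring
  have hsumf : ∑ j, (f j)^2 = n⁻¹ + t^2 * (1 - n⁻¹) := by
    have hterm : ∀ j, (f j)^2
        = (if j = v₂ then (2 * (n⁻¹ * (1 - t)) * t + t^2 : ℝ) else 0)
          + (n⁻¹ * (1 - t))^2 := by
      intro j
      rw [hfdef, hqdef]
      by_cases h : j = v₂ <;> simp [h] <;> ring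
    rw [Finset.sum_congr rfl fun j _ => hterm j, Finset.sum_add_distrib]
    rw [Finset.sum_ite_eq' Finset.univ v₂ (fun _ => (2 * (n⁻¹ * (1 - t)) * t + t^2 : ℝ)),
      if_pos (Finset.mem_univ v₂), Finset.sum_const, Finset.card_univ, nsmul_eq_mul,
      ← hndef]
    have hne : n ≠ 0 := ne_of_gt hn0
    field_simp
    ring
  have hqLq0 : 0 ≤ q ⬝ᵥ (L₂ *ᵥ q) := by simpa using hPSD₂.dotProduct_mulVec_nonneg q
  have hqLq : q ⬝ᵥ (L₂ *ᵥ q) ≤ lamMax * (1 - n⁻¹) := by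
    have hC : ∀ i, hH₂.eigenvalues i ≤ lamMax :=
      fun i => hlamMax.2 _ (hH₂.eigenvalues_mem_spectrum_real i)
    have := quad_upper hH₂ hC q
    rw [hqq] at this
    exact this
  have hfLf : f ⬝ᵥ (L₂ *ᵥ f) = t^2 * (q ⬝ᵥ (L₂ *ᵥ q)) := by
    have hfsum : f = (fun _ => n⁻¹) + t • q := by
      funext j; simp [hfdef]
    have hconst0 : L₂ *ᵥ (fun _ : V₂ => n⁻¹) = 0 := by
      have h1 : (fun _ : V₂ => n⁻¹) = n⁻¹ • (fun _ : V₂ => (1:ℝ)) := by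
        funext j; simp
      rw [h1, mulVec_smul, SimpleGraph.lapMatrix_mulVec_const_eq_zero, smul_zero]
    have hLf : L₂ *ᵥ f = t • (L₂ *ᵥ q) := by
      rw [hfsum, mulVec_add, hconst0, zero_add, mulVec_smul]
    rw [hLf, dotProduct_smul, hfsum, add_dotProduct, smul_dotProduct]
    have hzero : (fun _ : V₂ => n⁻¹) ⬝ᵥ (L₂ *ᵥ q) = 0 := by
      rw [dot_mulVec_symm hL₂t, hconst0, dotProduct_zero]
    rw [hzero]
    simp only [smul_eq_mul]
    ring
  -- the test vector on the product
  set z : V₁ × V₂ → ℝ := fun p => z₁ p.1 * f p.2 with hzdef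
  have hbz : b ⬝ᵥ z = ω * f v₂ := by
    rw [hbdef, diff_dotProduct]
    have haz : ω = z₁ v₁ - z₁ w₁ := by
      rw [hωdef, hadef, diff_dotProduct]
    rw [hzdef]
    simp only []
    rw [haz]
    ring
  have hzLz : z ⬝ᵥ (L *ᵥ z)
      = (∑ j, (f j)^2) * ω + (∑ i, (z₁ i)^2) * (f ⬝ᵥ (L₂ *ᵥ f)) := by
    rw [hzdef, hLdef, boxProd_quad G₁ G₂ z₁ f, hz₁quad]
  have hz₁sq : ∑ i, (z₁ i)^2 = z₁ ⬝ᵥ z₁ := by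
    rw [dotProduct]
    exact Finset.sum_congr rfl fun i _ => (pow_two _)
  -- main inequality
  have hu : L *ᵥ (pinv L *ᵥ b) = b := pinv_mulVec_solves hH hb_ker
  have hmain : 2 * (b ⬝ᵥ z) - z ⬝ᵥ (L *ᵥ z) ≤ b ⬝ᵥ (pinv L *ᵥ b) :=
    quad_bound hPSD hu z
  have heff : effRes (G₁.boxProd G₂) (v₁, v₂) (w₁, v₂) = b ⬝ᵥ (pinv L *ᵥ b) := by
    rw [effRes, effResM_eq_dot hH (v₁, v₂) (w₁, v₂)]
  rw [heff, hωeff]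
  refine le_trans ?_ hmain
  rw [hbz, hzLz, hsumf, hfLf, hz₁sq]
  -- bound the error term
  have herr : (z₁ ⬝ᵥ z₁) * (t^2 * (q ⬝ᵥ (L₂ *ᵥ q)))
      ≤ (ω / lam₂) * (t^2 * (lamMax * (1 - n⁻¹))) := by
    have hA : z₁ ⬝ᵥ z₁ ≤ ω / lam₂ := by
      rw [le_div_iff₀ hlam2pos, mul_comm]
      exact hz₁norm
    have h1 : (z₁ ⬝ᵥ z₁) * (t^2 * (q ⬝ᵥ (L₂ *ᵥ q)))
        ≤ (ω / lam₂) * (t^2 * (q ⬝ᵥ (L₂ *ᵥ q))) := by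
      apply mul_le_mul_of_nonneg_right hA
      positivity
    refine le_trans h1 ?_
    apply mul_le_mul_of_nonneg_left _ (by positivity)
    apply mul_le_mul_of_nonneg_left hqLq (by positivity)
  have hstep : (n⁻¹ + (1 - n⁻¹) * (lam₂ / (lam₂ + lamMax))) * ω
      = 2 * (ω * f v₂) - ((n⁻¹ + t^2 * (1 - n⁻¹)) * ω
        + (ω / lam₂) * (t^2 * (lamMax * (1 - n⁻¹)))) := by
    rw [hfv₂, htdef]
    have hne1 : lam₂ ≠ 0 := ne_of_gt hlam2pos
    have hne2 : lam₂ + lamMax ≠ 0 := ne_of_gt hSpos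
    field_simp
    ring
  rw [← htdef] at hstep
  rw [hstep]
  linarith [herr]
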